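/- (5.2(a).) Suppose N := T − 1 is nilpotent and v_1, …, v_σ ∈ V satisfy the normalized 𝒮-conditions. Then for every k ≥ 1, dim N^k(V) ≥ Σ_{r=1}^{σ} max(2p_r − 1 − k, 0); equivalently, dim ker(N^k) ≤ Σ_{r=1}^{σ} min(k, 2p_r − 1). -/

import Mathlib

open Module

section Aux
variable {𝕜 : Type*} [Field 𝕜] {V : Type*} [AddCommGroup V] [Module 𝕜 V]

private lemma aux_zpow_apply_add (T : V ≃ₗ[𝕜] V) (a b : ℤ) (x : V) :
    (T^(a+b)) x = (T^a) ((T^b) x) := by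
  rw [zpow_add]; rfl

private lemma aux_powAppl (T : V ≃ₗ[𝕜] V) (j : ℕ) (x : V) :
    ((T : Module.End 𝕜 V)^j) x = (T^(j:ℤ)) x := by
  rw [zpow_natCast, Module.End.pow_apply, LinearEquiv.coe_pow]
  norm_cast

private lemma aux_expand (T : V ≃ₗ[𝕜] V) (k : ℕ) (x : V) :
    ((((T : Module.End 𝕜 V) - 1))^k) x
      = ∑ j ∈ Finset.range (k+1), ((-1:ℤ)^(k-j) * (k.choose j) : ℤ) • ((T^(j:ℤ)) x) := by
  have hc : Commute (T : Module.End 𝕜 V) (-1 : Module.End 𝕜 V) := (Commute.one_right _).neg_right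
  rw [sub_eq_add_neg, hc.add_pow, LinearMap.sum_apply]
  refine Finset.sum_congr rfl fun j hj => ?_
  have h1 : ((-1 : Module.End 𝕜 V))^(k-j) = ((((-1:ℤ)^(k-j) : ℤ)) : Module.End 𝕜 V) := by
    norm_cast
  rw [Module.End.mul_apply, Module.End.mul_apply, h1]
  rw [Module.End.natCast_apply, Module.End.intCast_apply, ← aux_powAppl]
  rw [map_zsmul, map_nsmul, ← natCast_zsmul, smul_smul]

private lemma aux_inv (B : V →ₗ[𝕜] V →ₗ[𝕜] 𝕜) (T : V ≃ₗ[𝕜] V)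
    (hT : ∀ x y, B (T x) y = B y x) (m : ℤ) (x y : V) :
    B ((T^m) x) ((T^m) y) = B x y := by
  have h1 : ∀ x y : V, B (T x) (T y) = B x y := fun x y => (hT x (T y)).trans (hT y x)
  have h2 : ∀ x y : V, B (T.symm x) (T.symm y) = B x y := by
    intro x y
    conv_rhs => rw [← T.apply_symm_apply x, ← T.apply_symm_apply y, h1]
  induction m using Int.induction_on with
  | zero => simp
  | succ i ih =>
      rw [show ((i:ℤ)+1) = 1 + (i:ℤ) by ring, aux_zpow_apply_add, aux_zpow_apply_add, zpow_one, h1]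
      exact ih
  | pred i ih =>
      rw [show (-(i:ℤ)-1) = (-1) + (-(i:ℤ)) by ring, aux_zpow_apply_add, aux_zpow_apply_add]
      have hs : ∀ z : V, (T^(-1:ℤ)) z = T.symm z := by intro z; rw [zpow_neg_one]; rfl
      rw [hs, hs, h2]
      exact ih

private lemma aux_shift (B : V →ₗ[𝕜] V →ₗ[𝕜] 𝕜) (T : V ≃ₗ[𝕜] V)
    (hT : ∀ x y, B (T x) y = B y x) (b c : ℤ) (x y : V) :
    B ((T^b) x) ((T^c) y) = B x ((T^(c-b)) y) := by
  have h := aux_inv B T hT (-b) ((T^b) x) ((T^c) y)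
  rw [← h, ← aux_zpow_apply_add, ← aux_zpow_apply_add]
  norm_num
  rw [show -b + c = c - b by ring]

private lemma aux_symm (B : V →ₗ[𝕜] V →ₗ[𝕜] 𝕜) (T : V ≃ₗ[𝕜] V)
    (hT : ∀ x y, B (T x) y = B y x) (m : ℤ) (x y : V) :
    B x ((T^m) y) = B y ((T^(-1-m)) x) := by
  have h : ∀ z : V, B x z = B z (T.symm x) := by
    intro z
    conv_lhs => rw [← T.apply_symm_apply x]
    exact hT (T.symm x) z
  rw [h ((T^m) y)]
  have hs : T.symm x = (T^(-1:ℤ)) x := by rw [zpow_neg_one]; rfl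
  rw [hs, aux_shift B T hT m (-1)]

private lemma aux_entry (B : V →ₗ[𝕜] V →ₗ[𝕜] 𝕜) (T : V ≃ₗ[𝕜] V)
    (hT : ∀ x y, B (T x) y = B y x) (k : ℕ) (a b : ℤ) (x y : V) :
    B ((T^b) x) (((((T : Module.End 𝕜 V) - 1))^k) ((T^a) y)) =
      ∑ j ∈ Finset.range (k+1), ((-1:ℤ)^(k-j) * (k.choose j) : ℤ) • B x ((T^(a - b + (j:ℤ))) y) := by
  rw [aux_expand, map_sum]
  refine Finset.sum_congr rfl fun j hj => ?_
  rw [map_zsmul]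
  congr 1
  rw [← aux_zpow_apply_add, aux_shift B T hT, show (j:ℤ) + a - b = a - b + (j:ℤ) by ring]

private lemma aux_sum_Icc_one {M : Type*} [AddCommMonoid M] (f : ℕ → M) (σ : ℕ) :
    ∑ r ∈ Finset.Icc 1 σ, f r = ∑ r ∈ Finset.range σ, f (r+1) := by
  induction σ with
  | zero => simp
  | succ t ih => rw [Finset.sum_range_succ, ← ih, Finset.sum_Icc_succ_top (by omega)]

end Aux

/-- 5.2(a): if `N = T − 1` is nilpotent and `v₁,…,v_σ` satisfy the normalized 𝒮-conditions,
then `dim N^k(V) ≥ Σ_r max(2p_r−1−k, 0)` for all `k ≥ 1`; equivalently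
`dim ker(N^k) ≤ Σ_r min(k, 2p_r−1)`. -/
theorem rank_pow_ge_of_S_conditions
    (𝕜 : Type*) [Field 𝕜] [IsAlgClosed 𝕜]
    (V : Type*) [AddCommGroup V] [Module 𝕜 V] [FiniteDimensional 𝕜 V]
    (σ n : ℕ) (p : ℕ → ℕ)
    (hσ : 1 ≤ σ) (hn1 : 1 ≤ n)
    (hp1 : ∀ r, 1 ≤ r → r ≤ σ → 1 ≤ p r)
    (hmono : ∀ r, 1 ≤ r → r < σ → p (r + 1) ≤ p r)
    (hn : n = ∑ r ∈ Finset.Icc 1 σ, (2 * p r - 1))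
    (hdimV : finrank 𝕜 V = n)
    (B : V →ₗ[𝕜] V →ₗ[𝕜] 𝕜)
    (hBl : ∀ x, (∀ y, B x y = 0) → x = 0)
    (hBr : ∀ y, (∀ x, B x y = 0) → y = 0)
    (T : V ≃ₗ[𝕜] V)
    (hT : ∀ x y, B (T x) y = B y x)
    (hnil : IsNilpotent ((T : Module.End 𝕜 V) - 1))
    (v : ℕ → V)
    (hS1 : ∀ r ∈ Finset.Icc 1 σ, ∀ t ∈ Finset.Icc 1 σ, t < r →
      ∀ m : ℤ, -(p t : ℤ) ≤ m → m ≤ (p t : ℤ) - 2 → B (v r) ((T ^ m) (v t)) = 0)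
    (hS2 : ∀ r ∈ Finset.Icc 1 σ, ∀ m : ℤ, -(p r : ℤ) + 1 ≤ m → m ≤ (p r : ℤ) - 2 →
      B (v r) ((T ^ m) (v r)) = 0)
    (hS3 : ∀ r ∈ Finset.Icc 1 σ, B (v r) ((T ^ ((p r : ℤ) - 1)) (v r)) = 1) :
    (∀ k, 1 ≤ k →
      (∑ r ∈ Finset.Icc 1 σ, (2 * p r - 1 - k)) ≤
        finrank 𝕜 ↥(LinearMap.range (((T : Module.End 𝕜 V) - 1) ^ k))) ∧
    (∀ k, 1 ≤ k →
      finrank 𝕜 ↥(LinearMap.ker (((T : Module.End 𝕜 V) - 1) ^ k)) ≤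
        ∑ r ∈ Finset.Icc 1 σ, min k (2 * p r - 1)) := by
  classical
  -- antitonicity of p on [1, σ]
  have hpmono : ∀ b, b ≤ σ → ∀ a, 1 ≤ a → a ≤ b → p b ≤ p a := by
    intro b
    induction b with
    | zero => intro _ a ha hab; omega
    | succ t ih =>
        intro hbσ a ha hab
        rcases Nat.lt_or_ge a (t+1) with h | h
        · have h1 : p (t+1) ≤ p t := hmono t (by omega) (by omega)
          have h2 : p t ≤ p a := ih (by omega) a ha (by omega)
          omega
        · have he : a = t + 1 := by omega
          rw [he]
  -- vanishing of B (v s) (T^m (v r)) in the three windows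
  have hF0 : ∀ s r : ℕ, s ∈ Finset.Icc 1 σ → r ∈ Finset.Icc 1 σ → ∀ m : ℤ,
      ((r < s ∧ -(p r:ℤ) ≤ m ∧ m ≤ (p r:ℤ) - 2) ∨
       (r = s ∧ -(p r:ℤ)+1 ≤ m ∧ m ≤ (p r:ℤ) - 2) ∨
       (s < r ∧ -(p s:ℤ)+1 ≤ m ∧ m ≤ (p s:ℤ) - 1)) → B (v s) ((T^m) (v r)) = 0 := by
    rintro s r hs hr m (⟨h, h1, h2⟩ | ⟨he, h1, h2⟩ | ⟨h, h1, h2⟩)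
    · exact hS1 s hs r hr h m h1 h2
    · subst he; exact hS2 r hr m h1 h2
    · rw [aux_symm B T hT]
      exact hS1 r hr s hs h (-1-m) (by omega) (by omega)
  have main : ∀ k, 1 ≤ k →
      (∑ r ∈ Finset.Icc 1 σ, (2 * p r - 1 - k)) ≤
        finrank 𝕜 ↥(LinearMap.range (((T : Module.End 𝕜 V) - 1) ^ k)) := by
    intro k hk
    set N : Module.End 𝕜 V := (T : Module.End 𝕜 V) - 1 with hN
    set L : ℕ → ℕ := fun r => 2 * p r - 1 - k with hLdef
    set ι := (r : Fin σ) × Fin (L (r.1+1)) with hι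
    set w : ι → V := fun i => (N^k) ((T^((i.2 : ℕ) : ℤ)) (v (i.1.1+1))) with hw
    set φ : ι → V := fun i =>
      (T^(((i.2:ℕ):ℤ) + (k:ℤ) + 1 - (p (i.1.1+1) : ℤ))) (v (i.1.1+1)) with hφ
    set key : ι → ℕ ×ₗ ℕ := fun i => toLex ((i.2 : ℕ), σ - (i.1.1+1)) with hkey
    -- the pairing is triangular
    have hentry : ∀ i i' : ι, key i < key i' → B (φ i') (w i) = 0 := by
      rintro ⟨⟨r, hrσ⟩, ⟨x, hxL⟩⟩ ⟨⟨s, hsσ⟩, ⟨x', hx'L⟩⟩ hlt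
      simp only [hkey, hw, hφ] at hlt ⊢
      rw [Prod.Lex.lt_iff] at hlt
      have hcase : x < x' ∨ (x = x' ∧ σ - (r+1) < σ - (s+1)) := by
        exact_mod_cast hlt
      have hxL' : x < 2 * p (r+1) - 1 - k := hxL
      have hx'L' : x' < 2 * p (s+1) - 1 - k := hx'L
      rw [aux_entry B T hT]
      refine Finset.sum_eq_zero fun j hj => ?_
      have hjk : j ≤ k := by
        have := Finset.mem_range.mp hj; omega
      rw [hF0 (s+1) (r+1) (Finset.mem_Icc.mpr ⟨by omega, by omega⟩)
        (Finset.mem_Icc.mpr ⟨by omega, by omega⟩) _ ?_, smul_zero]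
      rcases Nat.lt_trichotomy (r+1) (s+1) with hrs | hrs | hrs
      · left
        have hpm : p (s+1) ≤ p (r+1) := hpmono (s+1) (by omega) (r+1) (by omega) (by omega)
        have hxx : x < x' := by rcases hcase with h | ⟨h1, h2⟩ <;> omega
        refine ⟨hrs, by omega, by omega⟩
      · right; left
        have hps : p (r+1) = p (s+1) := by rw [show r = s by omega]
        have hxx : x < x' := by rcases hcase with h | ⟨h1, h2⟩ <;> omega
        refine ⟨by omega, by omega, by omega⟩
      · right; right
        have hpm : p (r+1) ≤ p (s+1) := hpmono (r+1) (by omega) (s+1) (by omega) (by omega)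
        have hxx : x ≤ x' := by rcases hcase with h | ⟨h1, h2⟩ <;> omega
        refine ⟨hrs, by omega, by omega⟩
    have hdiag : ∀ i : ι, B (φ i) (w i) = 1 := by
      rintro ⟨⟨r, hrσ⟩, ⟨x, hxL⟩⟩
      simp only [hw, hφ]
      have hxL' : x < 2 * p (r+1) - 1 - k := hxL
      have hr1 : r + 1 ∈ Finset.Icc 1 σ := Finset.mem_Icc.mpr ⟨by omega, by omega⟩
      rw [aux_entry B T hT, Finset.sum_range_succ]
      have hz : ∀ j ∈ Finset.range k,
          ((-1:ℤ)^(k-j) * (k.choose j) : ℤ) •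
            B (v (r+1)) ((T^(((x:ℕ):ℤ) - (((x:ℕ):ℤ) + (k:ℤ) + 1 - (p (r+1) : ℤ)) + (j:ℤ))) (v (r+1))) = 0 := by
        intro j hj
        have hjk : j < k := Finset.mem_range.mp hj
        rw [hS2 (r+1) hr1 _ (by omega) (by omega), smul_zero]
      rw [Finset.sum_eq_zero hz, zero_add]
      rw [show ((x:ℕ):ℤ) - (((x:ℕ):ℤ) + (k:ℤ) + 1 - (p (r+1) : ℤ)) + (k:ℤ) = (p (r+1):ℤ) - 1 by ring]
      rw [hS3 (r+1) hr1]
      simp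
    -- injectivity of key
    have hkeyinj : Function.Injective key := by
      rintro ⟨⟨r, hrσ⟩, ⟨x, hxL⟩⟩ ⟨⟨s, hsσ⟩, ⟨x', hx'L⟩⟩ he
      simp only [hkey] at he
      have h1 : ((x:ℕ), σ - (r+1)) = ((x':ℕ), σ - (s+1)) := by
        exact_mod_cast he
      have hx : (x:ℕ) = (x':ℕ) := congrArg Prod.fst h1
      have h2 : σ - (r+1) = σ - (s+1) := congrArg Prod.snd h1
      have hr : r = s := by omega
      subst hr
      have hxe : x = x' := hx
      subst hxe
      rfl
    -- linear independence of w
    have hind : LinearIndependent 𝕜 w := by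
      rw [linearIndependent_iff']
      have hstrong : ∀ s : Finset ι, ∀ g : ι → 𝕜,
          (∑ i ∈ s, g i • w i = 0) → ∀ i ∈ s, g i = 0 := by
        intro s
        induction s using Finset.strongInductionOn with
        | _ s ih =>
          intro g hsum i hi
          obtain ⟨i₀, hi₀, hmax⟩ := Finset.exists_max_image s key ⟨i, hi⟩
          have hgi₀ : g i₀ = 0 := by
            have h0 : B (φ i₀) (∑ i' ∈ s, g i' • w i') = 0 := by rw [hsum]; simp
            rw [map_sum] at h0
            have h0' : ∑ i' ∈ s, g i' * (B (φ i₀)) (w i') = 0 := by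
              rw [← h0]
              exact Finset.sum_congr rfl fun i' _ => by rw [map_smul]; rfl
            rw [Finset.sum_eq_single_of_mem i₀ hi₀] at h0'
            · rw [hdiag i₀, mul_one] at h0'; exact h0'
            · intro b hb hbne
              rw [hentry b i₀ ?_, mul_zero]
              rcases lt_or_eq_of_le (hmax b hb) with h | h
              · exact h
              · exact absurd (hkeyinj h) hbne
          have hsum' : ∑ i' ∈ s.erase i₀, g i' • w i' = 0 := by
            rw [← Finset.add_sum_erase s _ hi₀, hgi₀, zero_smul, zero_add] at hsum
            exact hsum
          by_cases hii : i = i₀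
          · rw [hii]; exact hgi₀
          · exact ih (s.erase i₀) (Finset.erase_ssubset hi₀) g hsum' i
              (Finset.mem_erase.mpr ⟨hii, hi⟩)
      exact hstrong
    -- vectors lie in the range
    have hmem : ∀ i : ι, w i ∈ LinearMap.range (N^k) := fun i =>
      LinearMap.mem_range_self (N^k) ((T^((i.2 : ℕ) : ℤ)) (v (i.1.1+1)))
    set w' : ι → ↥(LinearMap.range (N^k)) := fun i => ⟨w i, hmem i⟩ with hw'
    have hind' : LinearIndependent 𝕜 w' := by
      apply LinearIndependent.of_comp (LinearMap.range (N^k)).subtype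
      convert hind
      rfl
    have hcard := hind'.fintype_card_le_finrank
    have hcards : Fintype.card ι = ∑ r ∈ Finset.Icc 1 σ, L r := by
      rw [Fintype.card_sigma]
      simp only [Fintype.card_fin]
      rw [aux_sum_Icc_one L σ, Fin.sum_univ_eq_sum_range (fun i => L (i+1)) σ]
    rw [hcards] at hcard
    exact hcard
  refine ⟨main, ?_⟩
  intro k hk
  have h1 := main k hk
  have hrn := LinearMap.finrank_range_add_finrank_ker (((T : Module.End 𝕜 V) - 1)^k)
  have hsplit : ∑ r ∈ Finset.Icc 1 σ, (2*p r - 1) ≤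
      ∑ r ∈ Finset.Icc 1 σ, (min k (2*p r - 1) + (2*p r - 1 - k)) :=
    Finset.sum_le_sum (fun r hr => by omega)
  rw [Finset.sum_add_distrib] at hsplit
  omega
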